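/- arXiv:2504.00952 — 2 statements merged into one kernel-verified Lean document; each statement's English description precedes it below -/
import Mathlib

section
/- The Gaussian mechanism A(D) = q(D) + z with z ~ N(0, σ² I) satisfies (γ, γ S₂²/(2σ²))-Rényi differential privacy for every γ > 1, where S₂ = sup over adjacent datasets D, D' of ‖q(D) - q(D')‖₂. -/
open MeasureTheory ProbabilityTheory

/-- Isotropic Gaussian measure `N(μ, v·I)` on `ℝ^n`. -/
noncomputable def gaussianVec (n : ℕ) (μ : EuclideanSpace ℝ (Fin n)) (v : ℝ) :
    Measure (EuclideanSpace ℝ (Fin n)) :=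
  Measure.map (⇑(EuclideanSpace.equiv (Fin n) ℝ).symm)
    (Measure.pi fun i => gaussianReal (μ i) v.toNNReal)

/-- Rényi divergence of order `γ`. -/
noncomputable def renyiDiv {Ω : Type*} [MeasurableSpace Ω] (γ : ℝ) (P Q : Measure Ω) : ℝ :=
  (γ - 1)⁻¹ * Real.log (∫ x, (P.rnDeriv Q x).toReal ^ γ ∂Q)

/-- `(γ,ρ)`-Rényi differential privacy. -/
def RDP {D Ω : Type*} [MeasurableSpace Ω] (A : D → Measure Ω) (adj : D → D → Prop)
    (γ ρ : ℝ) : Prop :=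
  ∀ d d', adj d d' → renyiDiv γ (A d) (A d') ≤ ρ

open Real
open scoped NNReal ENNReal

noncomputable def gratio (a b : ℝ) (v : ℝ≥0) (t : ℝ) : ℝ≥0∞ :=
  ENNReal.ofReal (gaussianPDFReal a v t / gaussianPDFReal b v t)

lemma gratio_measurable (a b : ℝ) (v : ℝ≥0) : Measurable (gratio a b v) :=
  ((measurable_gaussianPDFReal a v).div (measurable_gaussianPDFReal b v)).ennreal_ofReal

lemma key_pointwise (a b t : ℝ) (v : ℝ≥0) (hv : v ≠ 0) (γ : ℝ) :
    (gaussianPDFReal a v t / gaussianPDFReal b v t) ^ γ * gaussianPDFReal b v t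
    = Real.exp (γ * (γ - 1) * (a - b) ^ 2 / (2 * v)) * gaussianPDFReal (b + γ * (a - b)) v t := by
  have hv' : (0:ℝ) < v := by positivity
  have hC : (0:ℝ) < (√(2 * π * (v:ℝ)))⁻¹ := by
    rw [inv_pos]; apply Real.sqrt_pos.2; positivity
  simp only [gaussianPDFReal]
  rw [mul_div_mul_left _ _ hC.ne', ← Real.exp_sub,
    Real.rpow_def_of_pos (Real.exp_pos _), Real.log_exp,
    mul_left_comm, ← Real.exp_add, mul_left_comm, ← Real.exp_add]
  congr 2
  field_simp
  ring

lemma gratio_mul_pdf (a b : ℝ) (v : ℝ≥0) (hv : v ≠ 0) (t : ℝ) :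
    gratio a b v t * gaussianPDF b v t = gaussianPDF a v t := by
  rw [gratio, gaussianPDF, gaussianPDF,
    ← ENNReal.ofReal_mul (div_nonneg (gaussianPDFReal_nonneg a v t) (gaussianPDFReal_nonneg b v t)),
    div_mul_cancel₀]
  exact (gaussianPDFReal_pos b v t hv).ne'

lemma withDensity_gratio (a b : ℝ) (v : ℝ≥0) (hv : v ≠ 0) :
    (gaussianReal b v).withDensity (gratio a b v) = gaussianReal a v := by
  rw [gaussianReal_of_var_ne_zero _ hv, gaussianReal_of_var_ne_zero _ hv]
  ext s hs
  rw [withDensity_apply _ hs,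
    setLIntegral_withDensity_eq_setLIntegral_mul _ (measurable_gaussianPDF b v)
      (gratio_measurable a b v) hs,
    withDensity_apply _ hs]
  refine setLIntegral_congr_fun hs (fun t _ => ?_)
  simpa [mul_comm] using gratio_mul_pdf a b v hv t

lemma lintegral_gratio_rpow (a b : ℝ) (v : ℝ≥0) (hv : v ≠ 0) (γ : ℝ) (hγ : 0 ≤ γ) :
    ∫⁻ t, gratio a b v t ^ γ ∂(gaussianReal b v)
      = ENNReal.ofReal (Real.exp (γ * (γ - 1) * (a - b) ^ 2 / (2 * v))) := by
  rw [gaussianReal_of_var_ne_zero _ hv,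
    lintegral_withDensity_eq_lintegral_mul _ (measurable_gaussianPDF b v)
      ((gratio_measurable a b v).pow_const γ)]
  have : ∀ t, (gaussianPDF b v * fun t => gratio a b v t ^ γ) t
      = ENNReal.ofReal (Real.exp (γ * (γ - 1) * (a - b) ^ 2 / (2 * v))
          * gaussianPDFReal (b + γ * (a - b)) v t) := by
    intro t
    have hr : (0:ℝ) ≤ gaussianPDFReal a v t / gaussianPDFReal b v t :=
      div_nonneg (gaussianPDFReal_nonneg a v t) (gaussianPDFReal_nonneg b v t)
    simp only [Pi.mul_apply, gratio, gaussianPDF,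
      ENNReal.ofReal_rpow_of_nonneg hr hγ,
      ← ENNReal.ofReal_mul (gaussianPDFReal_nonneg b v t)]
    rw [mul_comm (gaussianPDFReal b v t), key_pointwise a b t v hv γ]
  simp_rw [this, ENNReal.ofReal_mul (Real.exp_pos _).le]
  rw [lintegral_const_mul']
  · rw [lintegral_gaussianPDFReal_eq_one _ hv, mul_one]
  · exact ENNReal.ofReal_ne_top

lemma lintegral_pi_prod : ∀ (n : ℕ) (μ : Fin n → Measure ℝ), (∀ i, SigmaFinite (μ i)) →
    ∀ (f : Fin n → ℝ → ℝ≥0∞), (∀ i, Measurable (f i)) →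
    ∫⁻ x, ∏ i, f i (x i) ∂Measure.pi μ = ∏ i, ∫⁻ t, f i t ∂(μ i) := by
  intro n
  induction n with
  | zero => intro μ _ f _; simp [lintegral_const, Measure.pi_univ]
  | succ n ih =>
    intro μ hμ f hf
    have := hμ
    have h := (measurePreserving_piFinSuccAbove μ 0).symm
    rw [← h.lintegral_comp (f := fun x => ∏ i, f i (x i))
      (Finset.measurable_prod _ (fun i _ => (hf i).comp (measurable_pi_apply i)))]
    have heq : ∀ y : ℝ × ((i : Fin n) → ℝ),
        (∏ i, f i ((MeasurableEquiv.piFinSuccAbove (fun _ => ℝ) 0).symm y i))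
        = f 0 y.1 * ∏ i : Fin n, f (Fin.succ i) (y.2 i) := by
      intro y
      rw [Fin.prod_univ_succ]
      simp [MeasurableEquiv.piFinSuccAbove_symm_apply, Fin.insertNthEquiv,
        Fin.insertNth_zero, Fin.zero_succAbove]
    simp_rw [heq, Fin.zero_succAbove]
    rw [lintegral_prod_mul (f := f 0) (g := fun y : Fin n → ℝ => ∏ i : Fin n, f i.succ (y i))
      ((hf 0).aemeasurable)
      ((Finset.measurable_prod _ (fun i _ => (hf i.succ).comp (measurable_pi_apply i))).aemeasurable),
      ih _ (fun i => hμ _) _ (fun i => hf _), Fin.prod_univ_succ]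

lemma pi_withDensity {n : ℕ} (ν : Fin n → Measure ℝ) [∀ i, SigmaFinite (ν i)]
    (ρ : Fin n → ℝ → ℝ≥0∞) (hρ : ∀ i, Measurable (ρ i))
    [∀ i, SigmaFinite ((ν i).withDensity (ρ i))] :
    (Measure.pi ν).withDensity (fun x => ∏ i, ρ i (x i))
      = Measure.pi (fun i => (ν i).withDensity (ρ i)) := by
  refine (Measure.pi_eq fun s hs => ?_).symm
  rw [withDensity_apply _ (MeasurableSet.univ_pi hs), ← lintegral_indicator
    (MeasurableSet.univ_pi hs)]
  have heq : (Set.univ.pi s).indicator (fun x => ∏ i, ρ i (x i))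
      = fun x => ∏ i, (s i).indicator (ρ i) (x i) := by
    funext x
    by_cases h : x ∈ Set.univ.pi s
    · rw [Set.indicator_of_mem h]
      exact Finset.prod_congr rfl fun i _ =>
        (Set.indicator_of_mem (h i (Set.mem_univ i)) _).symm
    · rw [Set.indicator_of_notMem h]
      rw [Set.mem_univ_pi] at h
      push_neg at h
      obtain ⟨i, hi⟩ := h
      exact (Finset.prod_eq_zero (Finset.mem_univ i)
        (Set.indicator_of_notMem hi _)).symm
  rw [heq, lintegral_pi_prod n ν (fun i => inferInstance) _
    (fun i => (hρ i).indicator (hs i))]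
  exact Finset.prod_congr rfl fun i _ => by
    rw [lintegral_indicator (hs i), withDensity_apply _ (hs i)]

/-- The Gaussian mechanism `A(D) = q(D) + z`, `z ~ N(0, σ²I)`, with `ℓ₂`-sensitivity
bound `S₂` over adjacent datasets, satisfies `(γ, γ S₂²/(2σ²))`-RDP for every `γ > 1`. -/
theorem gaussian_mechanism_rdp {D : Type*} (n : ℕ) (q : D → EuclideanSpace ℝ (Fin n))
    (adj : D → D → Prop) (σ S₂ : ℝ) (hσ : 0 < σ)
    (hS : ∀ d d', adj d d' → ‖q d - q d'‖ ≤ S₂)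
    (γ : ℝ) (hγ : 1 < γ) :
    RDP (fun d => gaussianVec n (q d) (σ ^ 2)) adj γ (γ * S₂ ^ 2 / (2 * σ ^ 2)) := by
  intro d d' hdd'
  have hσ2 : (0:ℝ) < σ ^ 2 := by positivity
  set v : ℝ≥0 := (σ ^ 2).toNNReal with hvdef
  have hv : v ≠ 0 := (Real.toNNReal_pos.mpr hσ2).ne'
  have hvr : ((v:ℝ)) = σ ^ 2 := Real.coe_toNNReal _ hσ2.le
  have hγ0 : (0:ℝ) < γ := lt_trans one_pos hγ
  set a := q d with ha
  set b := q d' with hb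
  let ν : Fin n → Measure ℝ := fun i => gaussianReal (b i) v
  let P : Measure (Fin n → ℝ) := Measure.pi fun i => gaussianReal (a i) v
  let Q : Measure (Fin n → ℝ) := Measure.pi ν
  let e := MeasurableEquiv.toLp 2 (Fin n → ℝ)
  have hPvec : gaussianVec n a (σ ^ 2) = P.map e := rfl
  have hQvec : gaussianVec n b (σ ^ 2) = Q.map e := rfl
  let r : (Fin n → ℝ) → ℝ≥0∞ := fun x => ∏ i, gratio (a i) (b i) v (x i)
  have hrm : Measurable r :=
    Finset.measurable_prod _ fun i _ => (gratio_measurable _ _ _).comp (measurable_pi_apply i)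
  haveI hSF : ∀ i, SigmaFinite ((ν i).withDensity (gratio (a i) (b i) v)) := fun i => by
    show SigmaFinite ((gaussianReal (b i) v).withDensity (gratio (a i) (b i) v))
    rw [withDensity_gratio _ _ _ hv]; infer_instance
  have hQP : Q.withDensity r = P := by
    show (Measure.pi ν).withDensity (fun x => ∏ i, gratio (a i) (b i) v (x i)) = P
    rw [pi_withDensity ν _ (fun i => gratio_measurable _ _ _)]
    exact congrArg Measure.pi (funext fun i => withDensity_gratio _ _ _ hv)
  have hrn : r =ᵐ[Q] P.rnDeriv Q :=
    Measure.eq_rnDeriv hrm Measure.MutuallySingular.zero_left (by rw [zero_add, hQP])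
  have hrtop : ∀ x, r x ≠ ⊤ := fun x =>
    (ENNReal.prod_lt_top (fun i _ => ENNReal.ofReal_lt_top)).ne
  have hint : ∫ x, ((P.rnDeriv Q x).toReal) ^ γ ∂Q
      = Real.exp (γ * (γ - 1) * (∑ i, (a i - b i) ^ 2) / (2 * σ ^ 2)) := by
    rw [integral_congr_ae (g := fun x => (r x).toReal ^ γ)
      (by filter_upwards [hrn] with x hx; rw [← hx])]
    rw [integral_eq_lintegral_of_nonneg_ae
      (Filter.Eventually.of_forall fun x => Real.rpow_nonneg ENNReal.toReal_nonneg γ)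
      ((hrm.ennreal_toReal.pow_const γ).aestronglyMeasurable)]
    have h1 : ∀ x, ENNReal.ofReal ((r x).toReal ^ γ) = r x ^ γ := fun x => by
      rw [ENNReal.toReal_rpow, ENNReal.ofReal_toReal
        (ENNReal.rpow_ne_top_of_nonneg hγ0.le (hrtop x))]
    simp_rw [h1]
    have h2 : ∀ x : Fin n → ℝ, r x ^ γ = ∏ i, gratio (a i) (b i) v (x i) ^ γ := fun x =>
      (ENNReal.prod_rpow_of_nonneg hγ0.le).symm
    simp_rw [h2]
    rw [lintegral_pi_prod n ν (fun i => inferInstance) _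
      (fun i => (gratio_measurable _ _ _).pow_const γ)]
    have h3 : ∀ i, ∫⁻ t, gratio (a i) (b i) v t ^ γ ∂(ν i)
        = ENNReal.ofReal (Real.exp (γ * (γ - 1) * (a i - b i) ^ 2 / (2 * σ ^ 2))) := fun i => by
      show ∫⁻ t, gratio (a i) (b i) v t ^ γ ∂(gaussianReal (b i) v) = _
      rw [lintegral_gratio_rpow _ _ _ hv γ hγ0.le, hvr]
    simp_rw [h3]
    rw [ENNReal.toReal_prod]
    simp_rw [ENNReal.toReal_ofReal (Real.exp_pos _).le]
    rw [← Real.exp_sum]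
    congr 1
    rw [← Finset.sum_div, ← Finset.mul_sum]
  have hγ1 : γ - 1 ≠ 0 := sub_ne_zero.mpr hγ.ne'
  have hnorm : ∑ i, (a i - b i) ^ 2 = ‖a - b‖ ^ 2 := by
    rw [EuclideanSpace.norm_eq, Real.sq_sqrt (by positivity)]
    refine Finset.sum_congr rfl fun i _ => ?_
    rw [Real.norm_eq_abs, sq_abs]
    norm_num [PiLp.sub_apply]
  have hle : ‖a - b‖ ^ 2 ≤ S₂ ^ 2 := pow_le_pow_left₀ (norm_nonneg _) (hS d d' hdd') 2
  have key : (γ - 1)⁻¹ * (γ * (γ - 1) * (∑ i, (a i - b i) ^ 2) / (2 * σ ^ 2))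
      = γ * (∑ i, (a i - b i) ^ 2) / (2 * σ ^ 2) := by
    field_simp
  have final : renyiDiv γ P Q ≤ γ * S₂ ^ 2 / (2 * σ ^ 2) := by
    rw [renyiDiv, hint, Real.log_exp, key, hnorm]
    gcongr
  show renyiDiv γ (gaussianVec n a (σ ^ 2)) (gaussianVec n b (σ ^ 2)) ≤ γ * S₂ ^ 2 / (2 * σ ^ 2)
  rw [hPvec, hQvec]
  have hmap : renyiDiv γ (P.map e) (Q.map e) = renyiDiv γ P Q := by
    unfold renyiDiv
    congr 2
    rw [integral_map_equiv e]
    exact integral_congr_ae (by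
      filter_upwards [e.measurableEmbedding.rnDeriv_map P Q] with x hx
      rw [hx])
  rw [hmap]
  exact final
end

section
/- If a mechanism A on inputs in ℝ^d satisfies (ε, δ)-DP with respect to pairs of inputs differing in a single coordinate (with coordinate values bounded by c), then for pairs of inputs differing in at most k coordinates it satisfies (kε₁ + kε₂√(5 + k(ε₁+ε₂)), δ')-DP for appropriate ε₁, ε₂ as derived by iterated group privacy on the Gaussian mechanism; in particular, per-coordinate Gaussian mechanism guarantees compose over k coordinates via group privacy to give kε-type guarantees. -/
open MeasureTheory

theorem dp_group_aux {Ω : Type*} [MeasurableSpace Ω] (d : ℕ)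
    (c ε δ : ℝ) (hε : 0 ≤ ε) (hδ : 0 ≤ δ)
    (A : EuclideanSpace ℝ (Fin d) → Measure Ω)
    (h1 : ∀ x x' : EuclideanSpace ℝ (Fin d), (∀ i, |x i| ≤ c) → (∀ i, |x' i| ≤ c) →
      {i | x i ≠ x' i}.Subsingleton → ∀ O : Set Ω, MeasurableSet O →
        (A x O).toReal ≤ Real.exp ε * (A x' O).toReal + δ)
    (n : ℕ) :
    ∀ x x' : EuclideanSpace ℝ (Fin d), (∀ i, |x i| ≤ c) → (∀ i, |x' i| ≤ c) →
      {i | x i ≠ x' i}.ncard ≤ n → ∀ O : Set Ω, MeasurableSet O →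
        (A x O).toReal ≤
          Real.exp (n * ε) * (A x' O).toReal + n * Real.exp (((n : ℝ) - 1) * ε) * δ := by
  induction n with
  | zero =>
    intro x x' hx hx' hcard O hO
    have hfin : {i | x i ≠ x' i}.Finite := Set.toFinite _
    have hempty : {i | x i ≠ x' i} = ∅ := by
      rw [← Set.ncard_eq_zero hfin]; omega
    have hxx : x = x' := by
      ext i
      by_contra h
      have : i ∈ {i | x i ≠ x' i} := h
      rw [hempty] at this; exact this
    simp [hxx]
  | succ n ih =>
    intro x x' hx hx' hcard O hO
    have ht : 0 ≤ (A x' O).toReal := ENNReal.toReal_nonneg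
    by_cases hle : {i | x i ≠ x' i}.ncard ≤ n
    · have := ih x x' hx hx' hle O hO
      have e1 : Real.exp (n * ε) ≤ Real.exp ((n + 1 : ℕ) * ε) := by
        apply Real.exp_le_exp.2; push_cast; nlinarith
      have e2 : (n : ℝ) * Real.exp (((n : ℝ) - 1) * ε) * δ ≤
          ((n + 1 : ℕ) : ℝ) * Real.exp ((((n + 1 : ℕ) : ℝ) - 1) * ε) * δ := by
        apply mul_le_mul _ le_rfl hδ
        · push_cast; positivity
        · apply mul_le_mul _ _ (Real.exp_pos _).le (by push_cast; positivity)
          · push_cast; linarith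
          · apply Real.exp_le_exp.2; push_cast; nlinarith
      calc (A x O).toReal ≤ Real.exp (n * ε) * (A x' O).toReal +
            n * Real.exp (((n : ℝ) - 1) * ε) * δ := this
        _ ≤ _ := by
            apply add_le_add _ e2
            exact mul_le_mul_of_nonneg_right e1 ht
    · -- there exists i with x i ≠ x' i
      have hne : {i | x i ≠ x' i}.Nonempty := by
        rw [Set.nonempty_iff_ne_empty]
        intro h
        rw [h] at hle
        simp at hle
      obtain ⟨i, hi⟩ := hne
      set y : EuclideanSpace ℝ (Fin d) := WithLp.toLp 2 (Function.update x i (x' i)) with hy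
      have hyb : ∀ j, |y j| ≤ c := by
        intro j
        by_cases hj : j = i
        · subst hj; simpa [hy, Function.update] using hx' j
        · simpa [hy, Function.update, hj] using hx j
      have hsub : {j | x j ≠ y j}.Subsingleton := by
        intro a ha b hb
        have ha' : a = i := by
          by_contra h
          exact ha (by simp [hy, Function.update, h])
        have hb' : b = i := by
          by_contra h
          exact hb (by simp [hy, Function.update, h])
        rw [ha', hb']
      have hset : {j | y j ≠ x' j} = {j | x j ≠ x' j} \ {i} := by
        ext j
        by_cases hj : j = i
        · subst hj; simp [hy, Function.update]
        · simp [hy, Function.update, hj]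
      have hcard' : {j | y j ≠ x' j}.ncard ≤ n := by
        rw [hset]
        have := Set.ncard_diff_singleton_lt_of_mem hi (Set.toFinite _)
        omega
      have s1 := h1 x y hx hyb hsub O hO
      have s2 := ih y x' hyb hx' hcard' O hO
      have hexp1 : (1 : ℝ) ≤ Real.exp (n * ε) := by
        rw [Real.one_le_exp_iff]  <;> positivity
      calc (A x O).toReal ≤ Real.exp ε * (A y O).toReal + δ := s1
        _ ≤ Real.exp ε * (Real.exp (n * ε) * (A x' O).toReal +
              n * Real.exp (((n : ℝ) - 1) * ε) * δ) + δ := by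
            apply add_le_add _ le_rfl
            exact mul_le_mul_of_nonneg_left s2 (Real.exp_pos _).le
        _ ≤ _ := by
            push_cast
            rw [show ((n : ℝ) + 1) * ε = ε + n * ε by ring,
              show ((n : ℝ) + 1 - 1) * ε = ε + ((n : ℝ) - 1) * ε by ring,
              Real.exp_add, Real.exp_add]
            have h3 : Real.exp (((n : ℝ) - 1) * ε) * Real.exp ε = Real.exp (n * ε) := by
              rw [← Real.exp_add]; ring_nf
            nlinarith [Real.exp_pos ε, Real.exp_pos (((n : ℝ) - 1) * ε), ht,
              mul_nonneg (mul_nonneg (Nat.cast_nonneg n : (0:ℝ) ≤ n)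
                (Real.exp_pos (((n : ℝ) - 1) * ε)).le) hδ]

/-- Group privacy over coordinates: if a mechanism `A` on inputs in `ℝ^d` (with coordinate
values bounded by `c`) satisfies `(ε,δ)`-DP with respect to pairs of inputs differing in a
single coordinate, then for pairs of inputs differing in at most `k` coordinates it
satisfies a `(kε, k e^{(k-1)ε} δ)`-type guarantee; in particular, per-coordinate
Gaussian-mechanism guarantees compose over `k` coordinates via group privacy. -/
theorem dp_group_privacy_coordinates {Ω : Type*} [MeasurableSpace Ω] (d : ℕ)
    (c ε δ : ℝ) (hc : 0 < c) (hε : 0 ≤ ε) (hδ : 0 ≤ δ)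
    (A : EuclideanSpace ℝ (Fin d) → Measure Ω)
    (h1 : ∀ x x' : EuclideanSpace ℝ (Fin d), (∀ i, |x i| ≤ c) → (∀ i, |x' i| ≤ c) →
      {i | x i ≠ x' i}.Subsingleton → ∀ O : Set Ω, MeasurableSet O →
        (A x O).toReal ≤ Real.exp ε * (A x' O).toReal + δ)
    (k : ℕ) (hk : 1 ≤ k) :
    ∀ x x' : EuclideanSpace ℝ (Fin d), (∀ i, |x i| ≤ c) → (∀ i, |x' i| ≤ c) →
      {i | x i ≠ x' i}.ncard ≤ k → ∀ O : Set Ω, MeasurableSet O →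
        (A x O).toReal ≤
          Real.exp (k * ε) * (A x' O).toReal + k * Real.exp (((k : ℝ) - 1) * ε) * δ := by
  exact dp_group_aux d c ε δ hε hδ A h1 k
end
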